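/- For every finite alphabet Γ ⊆ ℕ^k and every regular language L over Γ, the set ∑L = {w₁ + w₂ + ... + w_n | w₁...w_n ∈ L} of componentwise sums of letters of words in L is a semi-linear subset of ℕ^k. -/

import Mathlib

/-- A linear subset of `ℕ^d`: all vectors `b₀ + z₁•b₁ + ... + z_ℓ•b_ℓ`. -/
def IsLinear {d : ℕ} (S : Set (Fin d → ℕ)) : Prop :=
  ∃ (b₀ : Fin d → ℕ) (ℓ : ℕ) (b : Fin ℓ → Fin d → ℕ),
    S = {v | ∃ z : Fin ℓ → ℕ, v = b₀ + ∑ i, z i • b i}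

/-- A semi-linear subset of `ℕ^d`: a finite union of linear sets. -/
def IsSemilinear {d : ℕ} (S : Set (Fin d → ℕ)) : Prop :=
  ∃ (n : ℕ) (T : Fin n → Set (Fin d → ℕ)), (∀ i, IsLinear (T i)) ∧ S = ⋃ i, T i

/-- The number of input-consuming steps among the first `i` steps. -/
def readCount (reads : ℕ → Bool) (i : ℕ) : ℕ :=
  ((Finset.range i).filter (fun j => reads j = true)).card

/-- A run of an ε-free vector-labeled automaton on the infinite word `α`:
`p` is the state sequence, `v i` the vector of the `i`-th transition. -/
def IsRun {Q Sig : Type} {d : ℕ} (q0 : Q) (Δ : Set (Q × Sig × (Fin d → ℕ) × Q))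
    (α : ℕ → Sig) (p : ℕ → Q) (v : ℕ → Fin d → ℕ) : Prop :=
  p 0 = q0 ∧ ∀ i, (p i, α i, v i, p (i + 1)) ∈ Δ

/-- A run of an automaton with ε-transitions `E` on the infinite word `α`;
`reads i = true` iff the `i`-th transition consumes an input symbol, and
infinitely many transitions must consume a symbol. -/
def IsEpsRun {Q Sig : Type} {d : ℕ} (q0 : Q) (Δ : Set (Q × Sig × (Fin d → ℕ) × Q))
    (E : Set (Q × (Fin d → ℕ) × Q)) (α : ℕ → Sig) (p : ℕ → Q) (v : ℕ → Fin d → ℕ)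
    (reads : ℕ → Bool) : Prop :=
  p 0 = q0 ∧ (∀ N, ∃ i, N ≤ i ∧ reads i = true) ∧
    ∀ i, if reads i then (p i, α (readCount reads i), v i, p (i + 1)) ∈ Δ
      else (p i, v i, p (i + 1)) ∈ E

/-- Prefix-acceptance: infinitely many positions `n ≥ 1` where the current state is
accepting and the accumulated vector sum lies in the (state-dependent) semi-linear set. -/
def PrefixCond {Q : Type} {d : ℕ} (F : Set Q) (C : Q → Set (Fin d → ℕ))
    (p : ℕ → Q) (v : ℕ → Fin d → ℕ) : Prop :=
  ∀ N, ∃ n, N ≤ n ∧ 1 ≤ n ∧ p n ∈ F ∧ (∑ j ∈ Finset.range n, v j) ∈ C (p n)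

/-- Weak reset-acceptance: there are infinitely many reset positions `0 = k 0 < k 1 < ...`
such that each `p (k (i+1))` is accepting and the vector sum between consecutive
reset positions lies in the corresponding semi-linear set. -/
def WeakCond {Q : Type} {d : ℕ} (F : Set Q) (C : Q → Set (Fin d → ℕ))
    (p : ℕ → Q) (v : ℕ → Fin d → ℕ) : Prop :=
  ∃ k : ℕ → ℕ, k 0 = 0 ∧ StrictMono k ∧
    ∀ i, p (k (i + 1)) ∈ F ∧
      (∑ j ∈ Finset.Ico (k i) (k (i + 1)), v j) ∈ C (p (k (i + 1)))

/-- Strong reset-acceptance: `k 1 < k 2 < ...` enumerates *all* positions `n ≥ 1` of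
accepting states (so there are infinitely many), and the vector sum between any two
consecutive such positions (with `k 0 = 0`) lies in the corresponding semi-linear set. -/
def StrongCond {Q : Type} {d : ℕ} (F : Set Q) (C : Q → Set (Fin d → ℕ))
    (p : ℕ → Q) (v : ℕ → Fin d → ℕ) : Prop :=
  ∃ k : ℕ → ℕ, k 0 = 0 ∧ StrictMono k ∧
    (∀ n, 1 ≤ n → (p n ∈ F ↔ ∃ i, 1 ≤ i ∧ k i = n)) ∧
    ∀ i, (∑ j ∈ Finset.Ico (k i) (k (i + 1)), v j) ∈ C (p (k (i + 1)))

/-- A Parikh(-Büchi) automaton of dimension `d` (also used as a Parikh automaton on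
finite words): finitely many states, vector-labeled transitions, a semi-linear set `C`. -/
structure PBA (Sig : Type) (d : ℕ) where
  Q : Type
  fin : Fintype Q
  q0 : Q
  Δ : Set (Q × Sig × (Fin d → ℕ) × Q)
  F : Set Q
  C : Set (Fin d → ℕ)

attribute [instance] PBA.fin

/-- `P_ω(A)`: the ω-language recognized under prefix-acceptance (PPBA). -/
def PBA.PrefixLang {Sig d} (A : PBA Sig d) : Set (ℕ → Sig) :=
  {α | ∃ p v, IsRun A.q0 A.Δ α p v ∧ PrefixCond A.F (fun _ => A.C) p v}

/-- `W_ω(A)`: the ω-language recognized under weak reset-acceptance (WPBA). -/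
def PBA.WeakLang {Sig d} (A : PBA Sig d) : Set (ℕ → Sig) :=
  {α | ∃ p v, IsRun A.q0 A.Δ α p v ∧ WeakCond A.F (fun _ => A.C) p v}

/-- `S_ω(A)`: the ω-language recognized under strong reset-acceptance (SPBA). -/
def PBA.StrongLang {Sig d} (A : PBA Sig d) : Set (ℕ → Sig) :=
  {α | ∃ p v, IsRun A.q0 A.Δ α p v ∧ StrongCond A.F (fun _ => A.C) p v}

/-- Acceptance of a finite word by a Parikh automaton. -/
def PBA.FinAccepts {Sig d} (A : PBA Sig d) (w : List Sig) : Prop :=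
  ∃ (p : ℕ → A.Q) (v : ℕ → Fin d → ℕ),
    p 0 = A.q0 ∧ (∀ i : Fin w.length, (p i, w.get i, v i, p (i + 1)) ∈ A.Δ) ∧
    p w.length ∈ A.F ∧ (∑ j ∈ Finset.range w.length, v j) ∈ A.C

/-- `L(A)`: the language of finite words recognized by a Parikh automaton. -/
def PBA.FinLang {Sig d} (A : PBA Sig d) : Set (List Sig) := {w | A.FinAccepts w}

/-- A Parikh-Büchi automaton with ε-transitions. -/
structure EpsPBA (Sig : Type) (d : ℕ) where
  Q : Type
  fin : Fintype Q
  q0 : Q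
  Δ : Set (Q × Sig × (Fin d → ℕ) × Q)
  E : Set (Q × (Fin d → ℕ) × Q)
  F : Set Q
  C : Set (Fin d → ℕ)

attribute [instance] EpsPBA.fin

def EpsPBA.PrefixLang {Sig d} (A : EpsPBA Sig d) : Set (ℕ → Sig) :=
  {α | ∃ p v reads, IsEpsRun A.q0 A.Δ A.E α p v reads ∧ PrefixCond A.F (fun _ => A.C) p v}

def EpsPBA.WeakLang {Sig d} (A : EpsPBA Sig d) : Set (ℕ → Sig) :=
  {α | ∃ p v reads, IsEpsRun A.q0 A.Δ A.E α p v reads ∧ WeakCond A.F (fun _ => A.C) p v}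

def EpsPBA.StrongLang {Sig d} (A : EpsPBA Sig d) : Set (ℕ → Sig) :=
  {α | ∃ p v reads, IsEpsRun A.q0 A.Δ A.E α p v reads ∧ StrongCond A.F (fun _ => A.C) p v}

/-- A Multi-PBA: every (accepting) state carries its own semi-linear set. -/
structure MPBA (Sig : Type) (d : ℕ) where
  Q : Type
  fin : Fintype Q
  q0 : Q
  Δ : Set (Q × Sig × (Fin d → ℕ) × Q)
  F : Set Q
  C : Q → Set (Fin d → ℕ)

attribute [instance] MPBA.fin

def MPBA.PrefixLang {Sig d} (A : MPBA Sig d) : Set (ℕ → Sig) :=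
  {α | ∃ p v, IsRun A.q0 A.Δ α p v ∧ PrefixCond A.F A.C p v}

/-- A Multi-PBA with ε-transitions. -/
structure EpsMPBA (Sig : Type) (d : ℕ) where
  Q : Type
  fin : Fintype Q
  q0 : Q
  Δ : Set (Q × Sig × (Fin d → ℕ) × Q)
  E : Set (Q × (Fin d → ℕ) × Q)
  F : Set Q
  C : Q → Set (Fin d → ℕ)

attribute [instance] EpsMPBA.fin

def EpsMPBA.StrongLang {Sig d} (A : EpsMPBA Sig d) : Set (ℕ → Sig) :=
  {α | ∃ p v reads, IsEpsRun A.q0 A.Δ A.E α p v reads ∧ StrongCond A.F A.C p v}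

/-- A language of finite words is Parikh-recognizable. -/
def ParikhRec {Sig : Type} (L : Set (List Sig)) : Prop :=
  ∃ d, ∃ A : PBA Sig d, IsSemilinear A.C ∧ A.FinLang = L

/-- An ω-language is PPBA-recognizable. -/
def PPBARec {Sig : Type} (L : Set (ℕ → Sig)) : Prop :=
  ∃ d, ∃ A : PBA Sig d, IsSemilinear A.C ∧ A.PrefixLang = L

/-- An ω-language is SPBA-recognizable. -/
def SPBARec {Sig : Type} (L : Set (ℕ → Sig)) : Prop :=
  ∃ d, ∃ A : PBA Sig d, IsSemilinear A.C ∧ A.StrongLang = L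

/-- Concatenation of a language of finite words with an ω-language. -/
def CatLang {Sig : Type} (L₁ : Set (List Sig)) (L₂ : Set (ℕ → Sig)) : Set (ℕ → Sig) :=
  {α | ∃ u ∈ L₁, ∃ β ∈ L₂,
    (∀ i : Fin u.length, α i = u.get i) ∧ ∀ n, β n = α (u.length + n)}

/-- `α` is the concatenation `w 0 ++ w 1 ++ w 2 ++ ⋯` of the finite words `w i`. -/
def IsOmegaConcat {Sig : Type} (w : ℕ → List Sig) (α : ℕ → Sig) : Prop :=
  ∀ n : ℕ, ∀ i : Fin (((List.range n).map w).flatten.length),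
    ((List.range n).map w).flatten.get i = α i

/-- The ω-power `L^ω = {w₁w₂w₃⋯ ∣ w_i ∈ L ∖ {ε}}`. -/
def OmegaPower {Sig : Type} (L : Set (List Sig)) : Set (ℕ → Sig) :=
  {α | ∃ w : ℕ → List Sig, (∀ i, w i ∈ L) ∧ (∀ i, w i ≠ []) ∧ IsOmegaConcat w α}

/-- Kleene star of a set of finite words. -/
def ListStar {Sig : Type} (L : Set (List Sig)) : Set (List Sig) :=
  {w | ∃ ws : List (List Sig), (∀ u ∈ ws, u ∈ L) ∧ w = ws.flatten}

/-- A (nondeterministic) Büchi automaton. -/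
structure BuchiNFA (Sig : Type) where
  Q : Type
  fin : Fintype Q
  q0 : Q
  Δ : Set (Q × Sig × Q)
  F : Set Q

attribute [instance] BuchiNFA.fin

def BuchiNFA.Lang {Sig} (B : BuchiNFA Sig) : Set (ℕ → Sig) :=
  {α | ∃ p : ℕ → B.Q, p 0 = B.q0 ∧ (∀ i, (p i, α i, p (i + 1)) ∈ B.Δ) ∧
    ∀ N, ∃ n, N ≤ n ∧ p n ∈ B.F}

/-- An ω-language is ω-regular if it is recognized by a Büchi automaton. -/
def OmegaRegular {Sig : Type} (R : Set (ℕ → Sig)) : Prop := ∃ B : BuchiNFA Sig, B.Lang = R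

/-- A blind `k`-counter machine: transitions are labeled by a letter or ε (`Option Sig`)
and an integer vector. -/
structure CM (Sig : Type) (k : ℕ) where
  Q : Type
  fin : Fintype Q
  q0 : Q
  Δ : Set (Q × Option Sig × (Fin k → ℤ) × Q)
  F : Set Q

attribute [instance] CM.fin

/-- The ω-language of a blind counter machine: some run reads every symbol of `α`
and is infinitely often in an accepting state with all counters equal to `0`. -/
def CM.Lang {Sig k} (M : CM Sig k) : Set (ℕ → Sig) :=
  {α | ∃ (p : ℕ → M.Q) (v : ℕ → Fin k → ℤ) (reads : ℕ → Bool),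
    p 0 = M.q0 ∧ (∀ N, ∃ i, N ≤ i ∧ reads i = true) ∧
    (∀ i, if reads i then (p i, some (α (readCount reads i)), v i, p (i + 1)) ∈ M.Δ
      else (p i, (none : Option Sig), v i, p (i + 1)) ∈ M.Δ) ∧
    ∀ N, ∃ n, N ≤ n ∧ p n ∈ M.F ∧ (∑ j ∈ Finset.range n, v j) = 0}
namespace SLAux
variable {d : ℕ}

def addSet (S T : Set (Fin d → ℕ)) : Set (Fin d → ℕ) := {v | ∃ x ∈ S, ∃ y ∈ T, v = x + y}

def starSet (S : Set (Fin d → ℕ)) : Set (Fin d → ℕ) :=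
  {v | ∃ l : List (Fin d → ℕ), (∀ x ∈ l, x ∈ S) ∧ v = l.sum}

lemma isSemilinear_of_isLinear {S : Set (Fin d → ℕ)} (h : IsLinear S) : IsSemilinear S :=
  ⟨1, fun _ => S, fun _ => h, (Set.iUnion_const S).symm⟩

lemma isSemilinear_empty : IsSemilinear (∅ : Set (Fin d → ℕ)) :=
  ⟨0, fun i => i.elim0, fun i => i.elim0, by simp⟩

lemma isLinear_singleton (v : Fin d → ℕ) : IsLinear ({v} : Set (Fin d → ℕ)) := by
  refine ⟨v, 0, Fin.elim0, ?_⟩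
  ext x
  simp [eq_comm]

lemma isSemilinear_singleton (v : Fin d → ℕ) : IsSemilinear ({v} : Set (Fin d → ℕ)) :=
  isSemilinear_of_isLinear (isLinear_singleton v)

lemma isSemilinear_iUnion {ι : Type*} [Fintype ι] (T : ι → Set (Fin d → ℕ))
    (h : ∀ i, IsSemilinear (T i)) : IsSemilinear (⋃ i, T i) := by
  choose n S hS hT using h
  let e := Fintype.equivFin (Σ i, Fin (n i))
  refine ⟨Fintype.card (Σ i, Fin (n i)), fun j => S (e.symm j).1 (e.symm j).2,
    fun j => hS _ _, ?_⟩
  ext x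
  simp only [Set.mem_iUnion]
  constructor
  · rintro ⟨i, hx⟩
    rw [hT i] at hx
    rcases Set.mem_iUnion.1 hx with ⟨j, hj⟩
    exact ⟨e ⟨i, j⟩, by rw [Equiv.symm_apply_apply]; exact hj⟩
  · rintro ⟨j, hj⟩
    exact ⟨(e.symm j).1, by rw [hT]; exact Set.mem_iUnion.2 ⟨(e.symm j).2, hj⟩⟩

lemma isSemilinear_union {S T : Set (Fin d → ℕ)} (hS : IsSemilinear S) (hT : IsSemilinear T) :
    IsSemilinear (S ∪ T) := by
  have := isSemilinear_iUnion (fun b : Bool => cond b S T) (by rintro (_ | _) <;> simpa)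
  simpa [Set.union_eq_iUnion] using this

lemma isLinear_addSet {S T : Set (Fin d → ℕ)} (hS : IsLinear S) (hT : IsLinear T) :
    IsLinear (addSet S T) := by
  obtain ⟨b₀, ℓ, b, rfl⟩ := hS
  obtain ⟨c₀, m, c, rfl⟩ := hT
  refine ⟨b₀ + c₀, ℓ + m, Fin.append b c, ?_⟩
  ext x
  constructor
  · rintro ⟨x₁, ⟨z, rfl⟩, x₂, ⟨y, rfl⟩, rfl⟩
    refine ⟨Fin.append z y, ?_⟩
    simp [Fin.sum_univ_add, Fin.append_left, Fin.append_right]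
    abel
  · rintro ⟨z, rfl⟩
    refine ⟨b₀ + ∑ i, z (Fin.castAdd m i) • b i, ⟨_, rfl⟩,
      c₀ + ∑ i, z (Fin.natAdd ℓ i) • c i, ⟨_, rfl⟩, ?_⟩
    simp [Fin.sum_univ_add, Fin.append_left, Fin.append_right]
    abel

lemma isSemilinear_addSet {S T : Set (Fin d → ℕ)} (hS : IsSemilinear S) (hT : IsSemilinear T) :
    IsSemilinear (addSet S T) := by
  obtain ⟨n, A, hA, rfl⟩ := hS
  obtain ⟨m, B, hB, rfl⟩ := hT
  have : addSet (⋃ i, A i) (⋃ j, B j) = ⋃ p : Fin n × Fin m, addSet (A p.1) (B p.2) := by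
    ext x
    simp only [addSet, Set.mem_iUnion, Set.mem_setOf_eq, Prod.exists]
    constructor
    · rintro ⟨a, ⟨i, ha⟩, b, ⟨j, hb⟩, rfl⟩
      exact ⟨i, j, a, ha, b, hb, rfl⟩
    · rintro ⟨i, j, a, ha, b, hb, rfl⟩
      exact ⟨a, ⟨i, ha⟩, b, ⟨j, hb⟩, rfl⟩
  rw [this]
  exact isSemilinear_iUnion _ fun p =>
    isSemilinear_of_isLinear (isLinear_addSet (hA _) (hB _))

lemma zero_mem_starSet (S : Set (Fin d → ℕ)) : 0 ∈ starSet S :=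
  ⟨[], by simp, by simp⟩

lemma add_mem_starSet {S : Set (Fin d → ℕ)} {x u : Fin d → ℕ} (hx : x ∈ S)
    (hu : u ∈ starSet S) : x + u ∈ starSet S := by
  obtain ⟨l, hl, rfl⟩ := hu
  exact ⟨x :: l, by intro y hy; rcases List.mem_cons.1 hy with rfl | hy; exacts [hx, hl y hy], by simp⟩

lemma starSet_empty : starSet (∅ : Set (Fin d → ℕ)) = {0} := by
  ext v
  constructor
  · rintro ⟨l, hl, rfl⟩
    cases l with
    | nil => simp
    | cons x l => exact absurd (hl x (by simp)) (by simp)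
  · rintro rfl
    exact zero_mem_starSet _

lemma starSet_union (S T : Set (Fin d → ℕ)) :
    starSet (S ∪ T) = addSet (starSet S) (starSet T) := by
  ext v
  constructor
  · rintro ⟨l, hl, rfl⟩
    induction l with
    | nil => exact ⟨0, zero_mem_starSet _, 0, zero_mem_starSet _, by simp⟩
    | cons x l ih =>
      obtain ⟨u, hu, w, hw, hsum⟩ := ih fun y hy => hl y (List.mem_cons_of_mem _ hy)
      rcases hl x (List.mem_cons_self) with hx | hx
      · exact ⟨x + u, add_mem_starSet hx hu, w, hw, by simp [hsum]; abel⟩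
      · exact ⟨u, hu, x + w, add_mem_starSet hx hw, by simp [hsum]; abel⟩
  · rintro ⟨u, ⟨l₁, h₁, rfl⟩, w, ⟨l₂, h₂, rfl⟩, rfl⟩
    refine ⟨l₁ ++ l₂, ?_, by simp⟩
    intro x hx
    rcases List.mem_append.1 hx with h | h
    exacts [Or.inl (h₁ x h), Or.inr (h₂ x h)]



lemma starSet_linear (b₀ : Fin d → ℕ) (ℓ : ℕ) (b : Fin ℓ → Fin d → ℕ) :
    starSet {v | ∃ z : Fin ℓ → ℕ, v = b₀ + ∑ i, z i • b i} =
      {0} ∪ {v | ∃ z : Fin (ℓ + 1) → ℕ, v = b₀ + ∑ i, z i • Fin.cons b₀ b i} := by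
  ext v
  constructor
  · rintro ⟨l, hl, rfl⟩
    induction l with
    | nil => simp
    | cons x l ih =>
      obtain ⟨z, rfl⟩ := hl x (List.mem_cons_self)
      rcases ih (fun y hy => hl y (List.mem_cons_of_mem _ hy)) with h0 | ⟨z', hz'⟩
      · right
        refine ⟨Fin.cons 0 z, ?_⟩
        simp only [List.sum_cons, Set.mem_singleton_iff.1 h0, add_zero,
          Fin.sum_univ_succ, Fin.cons_zero, Fin.cons_succ, zero_smul, zero_add]
      · right
        refine ⟨Fin.cons (z' 0 + 1) (fun i => z i + z' i.succ), ?_⟩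
        simp only [List.sum_cons, hz', Fin.sum_univ_succ, Fin.cons_zero, Fin.cons_succ,
          add_smul, one_smul, Finset.sum_add_distrib]
        abel
  · rintro (rfl | ⟨z, rfl⟩)
    · exact zero_mem_starSet _
    · refine ⟨(b₀ + ∑ i, z i.succ • b i) :: List.replicate (z 0) b₀, ?_, ?_⟩
      · intro x hx
        rcases List.mem_cons.1 hx with rfl | hx
        · exact ⟨fun i => z i.succ, rfl⟩
        · rw [List.eq_of_mem_replicate hx]
          exact ⟨0, by simp⟩
      · simp only [List.sum_cons, List.sum_replicate, Fin.sum_univ_succ, Fin.cons_zero,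
          Fin.cons_succ, smul_eq_mul]
        abel

lemma iUnion_fin_succ {n : ℕ} (T : Fin (n + 1) → Set (Fin d → ℕ)) :
    (⋃ i, T i) = T 0 ∪ ⋃ i : Fin n, T i.succ := by
  ext x
  simp [Set.mem_iUnion, Fin.exists_fin_succ]

lemma isSemilinear_starSet {S : Set (Fin d → ℕ)} (hS : IsSemilinear S) :
    IsSemilinear (starSet S) := by
  obtain ⟨n, T, hT, rfl⟩ := hS
  induction n with
  | zero =>
    rw [show (⋃ i : Fin 0, T i) = (∅ : Set (Fin d → ℕ)) by simp, starSet_empty]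
    exact isSemilinear_singleton 0
  | succ n ih =>
    rw [iUnion_fin_succ, starSet_union]
    refine isSemilinear_addSet ?_ (ih _ fun i => hT i.succ)
    obtain ⟨b₀, ℓ, b, hb⟩ := hT 0
    rw [hb, starSet_linear]
    exact isSemilinear_union (isSemilinear_singleton 0)
      (isSemilinear_of_isLinear ⟨b₀, ℓ + 1, Fin.cons b₀ b, rfl⟩)



section DFApart
variable {k : ℕ} {σ : Type*} [DecidableEq σ]

/-- Reading `w` (all letters in `Γ`) from `q` reaches `q'` with all intermediate
states in `A`. -/
def PathP (M : DFA (Fin k → ℕ) σ) (Γ : Finset (Fin k → ℕ)) (A : Finset σ) :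
    σ → σ → List (Fin k → ℕ) → Prop
  | q, q', [] => q = q'
  | q, q', a :: w => a ∈ Γ ∧ ((w = [] ∧ M.step q a = q') ∨
      (M.step q a ∈ A ∧ PathP M Γ A (M.step q a) q' w))

variable {M : DFA (Fin k → ℕ) σ} {Γ : Finset (Fin k → ℕ)}

/-- Sums of words along `A`-restricted paths from `q` to `q'`. -/
def sumsP (M : DFA (Fin k → ℕ) σ) (Γ : Finset (Fin k → ℕ)) (A : Finset σ) (q q' : σ) :
    Set (Fin k → ℕ) :=
  {v | ∃ w, PathP M Γ A q q' w ∧ v = w.sum}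

lemma PathP.mono {A B : Finset σ} (hAB : A ⊆ B) :
    ∀ {q q' : σ} {w : List (Fin k → ℕ)}, PathP M Γ A q q' w → PathP M Γ B q q' w := by
  intro q q' w
  induction w generalizing q with
  | nil => exact id
  | cons a w ih =>
    rintro ⟨ha, h | ⟨hmem, hp⟩⟩
    · exact ⟨ha, Or.inl h⟩
    · exact ⟨ha, Or.inr ⟨hAB hmem, ih hp⟩⟩

lemma PathP.append {A : Finset σ} {r q q' : σ} {w₁ w₂ : List (Fin k → ℕ)}
    (h₁ : PathP M Γ A q r w₁) (h₂ : PathP M Γ (insert r A) r q' w₂) :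
    PathP M Γ (insert r A) q q' (w₁ ++ w₂) := by
  induction w₁ generalizing q with
  | nil => rw [show q = r from h₁]; exact h₂
  | cons a w₁ ih =>
    obtain ⟨ha, h | ⟨hmem, hp⟩⟩ := h₁
    · obtain ⟨rfl, hstep⟩ := h
      cases w₂ with
      | nil => exact ⟨ha, Or.inl ⟨rfl, hstep.trans h₂⟩⟩
      | cons b w₂ =>
        exact ⟨ha, Or.inr ⟨by rw [hstep]; exact Finset.mem_insert_self _ _,
          by rw [hstep]; exact h₂⟩⟩
    · exact ⟨ha, Or.inr ⟨Finset.mem_insert_of_mem hmem, ih hp⟩⟩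

lemma PathP.split {A : Finset σ} {r q q' : σ} {w : List (Fin k → ℕ)}
    (h : PathP M Γ (insert r A) q q' w) :
    PathP M Γ A q q' w ∨ ∃ w₁ w₂, w = w₁ ++ w₂ ∧ w₁ ≠ [] ∧
      PathP M Γ A q r w₁ ∧ PathP M Γ (insert r A) r q' w₂ := by
  induction w generalizing q with
  | nil => exact Or.inl h
  | cons a w ih =>
    obtain ⟨ha, h | ⟨hmem, hp⟩⟩ := h
    · exact Or.inl ⟨ha, Or.inl h⟩
    · rcases Finset.mem_insert.1 hmem with heq | hA
      · exact Or.inr ⟨[a], w, rfl, by simp, ⟨ha, Or.inl ⟨rfl, heq⟩⟩, heq ▸ hp⟩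
      · rcases ih hp with h' | ⟨w₁, w₂, rfl, hne, p1, p2⟩
        · exact Or.inl ⟨ha, Or.inr ⟨hA, h'⟩⟩
        · exact Or.inr ⟨a :: w₁, w₂, rfl, by simp, ⟨ha, Or.inr ⟨hA, p1⟩⟩, p2⟩

lemma loop_decomp {A : Finset σ} {r q' : σ} :
    ∀ n (w : List (Fin k → ℕ)), w.length ≤ n → PathP M Γ (insert r A) r q' w →
      ∃ u ∈ starSet (sumsP M Γ A r r), ∃ t ∈ sumsP M Γ A r q', w.sum = u + t := by
  intro n
  induction n with
  | zero =>
    intro w hw h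
    rw [List.length_eq_zero_iff.1 (Nat.le_zero.1 hw)] at h ⊢
    exact ⟨0, zero_mem_starSet _, 0, ⟨[], h, rfl⟩, by simp⟩
  | succ n ih =>
    intro w hw h
    rcases h.split with h' | ⟨w₁, w₂, rfl, hne, p1, p2⟩
    · exact ⟨0, zero_mem_starSet _, w.sum, ⟨w, h', rfl⟩, (zero_add _).symm⟩
    · have hlen : w₂.length ≤ n := by
        have := (List.length_append : (w₁ ++ w₂).length = _) ▸ hw
        have h1 : 1 ≤ w₁.length := List.length_pos_iff.2 hne
        omega
      obtain ⟨u, hu, t, ht, hsum⟩ := ih w₂ hlen p2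
      exact ⟨w₁.sum + u, add_mem_starSet ⟨w₁, p1, rfl⟩ hu, t, ht,
        by rw [List.sum_append, hsum, add_assoc]⟩

lemma build_loops {A : Finset σ} {r q' : σ} {u : Fin k → ℕ}
    (hu : u ∈ starSet (sumsP M Γ A r r)) {w₂ : List (Fin k → ℕ)}
    (p₂ : PathP M Γ A r q' w₂) :
    ∃ w, PathP M Γ (insert r A) r q' w ∧ w.sum = u + w₂.sum := by
  obtain ⟨l, hl, rfl⟩ := hu
  induction l with
  | nil => exact ⟨w₂, p₂.mono (Finset.subset_insert _ _), by simp⟩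
  | cons x l ih =>
    obtain ⟨w, hw, hsum⟩ := ih fun y hy => hl y (List.mem_cons_of_mem _ hy)
    obtain ⟨w₀, p₀, rfl⟩ := hl x (List.mem_cons_self)
    exact ⟨w₀ ++ w, p₀.append hw, by rw [List.sum_append, hsum, List.sum_cons, add_assoc]⟩

lemma sumsP_insert {A : Finset σ} (r q q' : σ) :
    sumsP M Γ (insert r A) q q' = sumsP M Γ A q q' ∪
      addSet (sumsP M Γ A q r)
        (addSet (starSet (sumsP M Γ A r r)) (sumsP M Γ A r q')) := by
  ext v
  constructor
  · rintro ⟨w, hp, rfl⟩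
    rcases hp.split with h' | ⟨w₁, w₂, rfl, hne, p1, p2⟩
    · exact Or.inl ⟨w, h', rfl⟩
    · obtain ⟨u, hu, t, ht, hsum⟩ := loop_decomp w₂.length w₂ le_rfl p2
      exact Or.inr ⟨w₁.sum, ⟨w₁, p1, rfl⟩, u + t, ⟨u, hu, t, ht, rfl⟩,
        by rw [List.sum_append, hsum]⟩
  · rintro (⟨w, hp, rfl⟩ | ⟨x, ⟨w₁, p1, rfl⟩, y, ⟨u, hu, t, ⟨w₂, p2, rfl⟩, rfl⟩, rfl⟩)
    · exact ⟨w, hp.mono (Finset.subset_insert _ _), rfl⟩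
    · obtain ⟨w, hw, hsum⟩ := build_loops hu p2
      exact ⟨w₁ ++ w, p1.append hw, by rw [List.sum_append, hsum]⟩

end DFApart

section Main
variable {k : ℕ} {σ : Type*} [DecidableEq σ] {M : DFA (Fin k → ℕ) σ} {Γ : Finset (Fin k → ℕ)}

lemma isSemilinear_cond (P : Prop) (S : Set (Fin k → ℕ)) (hS : IsSemilinear S) :
    IsSemilinear {v | P ∧ v ∈ S} := by
  by_cases hP : P
  · have : {v | P ∧ v ∈ S} = S := by ext v; simp [hP]
    rwa [this]
  · have : {v | P ∧ v ∈ S} = (∅ : Set (Fin k → ℕ)) := by ext v; simp [hP]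
    rw [this]; exact isSemilinear_empty

lemma sumsP_empty (q q' : σ) :
    sumsP M Γ (∅ : Finset σ) q q' =
      {v | q = q' ∧ v ∈ ({0} : Set (Fin k → ℕ))} ∪
        ⋃ a : Γ, {v | M.step q a.1 = q' ∧ v ∈ ({a.1} : Set (Fin k → ℕ))} := by
  ext v
  constructor
  · rintro ⟨w, hp, rfl⟩
    cases w with
    | nil => exact Or.inl ⟨hp, by simp⟩
    | cons a w =>
      obtain ⟨ha, h | ⟨hmem, -⟩⟩ := hp
      · obtain ⟨rfl, hstep⟩ := h
        exact Or.inr (Set.mem_iUnion.2 ⟨⟨a, ha⟩, hstep, by simp⟩)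
      · exact absurd hmem (Finset.notMem_empty _)
  · rintro (⟨rfl, hv⟩ | hv)
    · exact ⟨[], rfl, by simpa using hv⟩
    · obtain ⟨⟨a, ha⟩, hstep, hv⟩ := Set.mem_iUnion.1 hv
      rw [Set.mem_singleton_iff.1 hv]
      exact ⟨[a], ⟨ha, Or.inl ⟨rfl, hstep⟩⟩, by simp⟩

lemma isSemilinear_sumsP (A : Finset σ) : ∀ q q', IsSemilinear (sumsP M Γ A q q') := by
  induction A using Finset.induction_on with
  | empty =>
    intro q q'
    rw [sumsP_empty]
    refine isSemilinear_union (isSemilinear_cond _ _ (isSemilinear_singleton 0)) ?_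
    exact isSemilinear_iUnion _ fun a => isSemilinear_cond _ _ (isSemilinear_singleton a.1)
  | @insert r A hr ih =>
    intro q q'
    rw [sumsP_insert]
    exact isSemilinear_union (ih q q')
      (isSemilinear_addSet (ih q r)
        (isSemilinear_addSet (isSemilinear_starSet (ih r r)) (ih r q')))

lemma pathP_univ [Fintype σ] {q q' : σ} {w : List (Fin k → ℕ)} :
    PathP M Γ Finset.univ q q' w ↔ M.evalFrom q w = q' ∧ ∀ a ∈ w, a ∈ Γ := by
  induction w generalizing q with
  | nil => simp [PathP, DFA.evalFrom, eq_comm]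
  | cons a w ih =>
    constructor
    · rintro ⟨ha, h | ⟨-, hp⟩⟩
      · obtain ⟨rfl, hstep⟩ := h
        exact ⟨by simpa [DFA.evalFrom] using hstep, by simp [ha]⟩
      · obtain ⟨he, hw⟩ := ih.1 hp
        refine ⟨by simpa [DFA.evalFrom] using he, ?_⟩
        intro x hx
        rcases List.mem_cons.1 hx with rfl | hx
        exacts [ha, hw x hx]
    · rintro ⟨he, hw⟩
      refine ⟨hw a (List.mem_cons_self), Or.inr ⟨Finset.mem_univ _, ih.2 ⟨?_, ?_⟩⟩⟩
      · simpa [DFA.evalFrom] using he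
      · exact fun x hx => hw x (List.mem_cons_of_mem _ hx)

end Main
end SLAux


/-- For every finite alphabet `Γ ⊆ ℕ^k` and every regular language `L` over `Γ`,
the set `∑L` of componentwise sums of the letters of words of `L` is semi-linear. -/
theorem semilinear_sum_of_regular {k : ℕ} (Γ : Finset (Fin k → ℕ))
    (L : Language (Fin k → ℕ)) (hΓ : ∀ w ∈ L, ∀ a ∈ w, a ∈ Γ)
    (hL : L.IsRegular) :
    IsSemilinear {s : Fin k → ℕ | ∃ w ∈ L, s = w.sum} := by
  classical
  obtain ⟨σ, _, M, hM⟩ := hL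
  have key : {s : Fin k → ℕ | ∃ w ∈ L, s = w.sum} =
      ⋃ q' : σ, {v | q' ∈ M.accept ∧ v ∈ SLAux.sumsP M Γ Finset.univ M.start q'} := by
    ext s
    constructor
    · rintro ⟨w, hw, rfl⟩
      refine Set.mem_iUnion.2 ⟨M.evalFrom M.start w, ?_, ⟨w, ?_, rfl⟩⟩
      · have : w ∈ M.accepts := by rw [hM]; exact hw
        exact (DFA.mem_accepts M).1 this
      · exact SLAux.pathP_univ.2 ⟨rfl, hΓ w hw⟩
    · intro hs
      obtain ⟨q', hacc, w, hp, rfl⟩ := Set.mem_iUnion.1 hs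
      obtain ⟨he, -⟩ := SLAux.pathP_univ.1 hp
      refine ⟨w, ?_, rfl⟩
      rw [← hM]
      refine (DFA.mem_accepts M).2 ?_
      show M.evalFrom M.start w ∈ M.accept
      rw [he]; exact hacc
  rw [key]
  exact SLAux.isSemilinear_iUnion _ fun q' =>
    SLAux.isSemilinear_cond _ _ (SLAux.isSemilinear_sumsP Finset.univ M.start q')
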